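/- arXiv:1805.08577 — 2 statements merged into one kernel-verified Lean document; each statement's English description precedes it below -/
import Mathlib

section
/- Let F be a field of order q ≥ n + 2, let f : {0,1}^n → F be any function with multilinear extension g, let x ∈ {0,1}^n ⊆ F^n, and let y ∈ F^n be nonzero. Then f(x) can be recovered by Lagrange interpolation at 0 from the q − 1 pairs (j, g(x + j·y)) for j ∈ F \ {0}: the unique polynomial of degree < q − 1 through these points, evaluated at 0, equals f(x). -/
open scoped Classical

/-- For a field `F` with `q ≥ n + 2` elements, `f : {0,1}^n → F` with multilinear
extension `g`, `x ∈ {0,1}^n`, and nonzero `y ∈ F^n`: the Lagrange interpolation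
polynomial through the points `(j, g(x + j·y))` for `j ∈ F \ {0}`, evaluated at `0`,
equals `f(x)`. -/
theorem stmt_4 (F : Type*) [Field F] [Fintype F] (n : ℕ)
    (hcard : n + 2 ≤ Fintype.card F)
    (f : (Fin n → Fin 2) → F) (g : MvPolynomial (Fin n) F)
    (hml : ∀ i : Fin n, g.degreeOf i ≤ 1)
    (hext : ∀ w : Fin n → Fin 2,
      MvPolynomial.eval (fun i => ((w i : ℕ) : F)) g = f w)
    (x : Fin n → Fin 2) (y : Fin n → F) (hy : y ≠ 0) :
    (Lagrange.interpolate (Finset.univ.erase (0 : F)) id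
        (fun j => MvPolynomial.eval (fun i => ((x i : ℕ) : F) + j * y i) g)).eval 0
      = f x := by
  set u : Fin n → Polynomial F :=
    fun i => Polynomial.C ((x i : ℕ) : F) + Polynomial.X * Polynomial.C (y i) with hu
  set P : Polynomial F := MvPolynomial.aeval u g with hP
  have heval : ∀ j : F, P.eval j
      = MvPolynomial.eval (fun i => ((x i : ℕ) : F) + j * y i) g := by
    intro j
    rw [hP, MvPolynomial.aeval_def, MvPolynomial.eval₂_eq, Polynomial.eval_finset_sum,
      MvPolynomial.eval_eq]
    refine Finset.sum_congr rfl fun d _ => ?_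
    rw [Polynomial.eval_mul, Polynomial.eval_prod]
    simp only [hu, Polynomial.eval_pow, Polynomial.eval_add, Polynomial.eval_C,
      Polynomial.eval_mul, Polynomial.eval_X, Polynomial.algebraMap_eq]
  have hun : ∀ i, (u i).natDegree ≤ 1 := by
    intro i
    refine (Polynomial.natDegree_add_le _ _).trans ?_
    simp
    exact (Polynomial.natDegree_mul_le).trans (by simp)
  have hdeg : P.natDegree ≤ n := by
    rw [hP, MvPolynomial.aeval_def, MvPolynomial.eval₂_eq]
    refine Polynomial.natDegree_sum_le_of_forall_le _ _ fun d hd => ?_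
    refine (Polynomial.natDegree_mul_le).trans ?_
    simp only [Polynomial.algebraMap_eq, Polynomial.natDegree_C, Nat.zero_add, zero_add]
    refine (Polynomial.natDegree_prod_le _ _).trans ?_
    calc ∑ i ∈ d.support, (u i ^ d i).natDegree
        ≤ ∑ i ∈ d.support, d i * 1 := by
          refine Finset.sum_le_sum fun i _ => ?_
          exact Polynomial.natDegree_pow_le.trans (Nat.mul_le_mul le_rfl (hun i))
      _ ≤ ∑ i : Fin n, 1 := by
          refine (Finset.sum_le_sum_of_subset (Finset.subset_univ _)).trans ?_
          refine Finset.sum_le_sum fun i _ => ?_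
          rw [mul_one]
          exact le_trans (MvPolynomial.monomial_le_degreeOf i hd) (hml i)
      _ = n := by simp
  have hs : (n : ℕ) + 1 ≤ (Finset.univ.erase (0 : F)).card := by
    rw [Finset.card_erase_of_mem (Finset.mem_univ _), Finset.card_univ]
    omega
  have hlt' : P.natDegree < (Finset.univ.erase (0 : F)).card := by omega
  have hdlt : P.degree < ((Finset.univ.erase (0 : F)).card : ℕ) :=
    lt_of_le_of_lt Polynomial.degree_le_natDegree (by exact_mod_cast hlt')
  have hinj : Set.InjOn (id : F → F) (Finset.univ.erase (0 : F)) :=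
    Function.injective_id.injOn
  have key : P = Lagrange.interpolate (Finset.univ.erase (0 : F)) id
      (fun j => MvPolynomial.eval (fun i => ((x i : ℕ) : F) + j * y i) g) := by
    refine Lagrange.eq_interpolate_of_eval_eq _ hinj hdlt fun j _ => ?_
    simp [heval j]
  rw [← key, heval 0]
  simpa using hext x
end

section
/- Let F be a finite field of order q ≥ n + 2, f : {0,1}^n → F_2 ⊆ F arbitrary with multilinear extension g, and x ∈ {0,1}^n. For any nonzero y ∈ F^n, given the complete list of values (g(x + j·y))_{j ∈ F \ {0}}, the value f(x) is uniquely determined and computable via polynomial interpolation. -/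
/-- For a finite field `F` of order `q ≥ n + 2`, `f : {0,1}^n → F_2 ⊆ F` with multilinear
extension `g`, `x ∈ {0,1}^n`, and nonzero `y ∈ F^n`: the list of values
`(g(x + j·y))_{j ∈ F \ {0}}` uniquely determines `f(x)`. -/
theorem stmt_19 (F : Type*) [Field F] [Fintype F] (n : ℕ)
    (hcard : n + 2 ≤ Fintype.card F)
    (f f' : (Fin n → Fin 2) → Fin 2) (g g' : MvPolynomial (Fin n) F)
    (hml : ∀ i : Fin n, g.degreeOf i ≤ 1) (hml' : ∀ i : Fin n, g'.degreeOf i ≤ 1)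
    (hext : ∀ w : Fin n → Fin 2,
      MvPolynomial.eval (fun i => ((w i : ℕ) : F)) g = ((f w : ℕ) : F))
    (hext' : ∀ w : Fin n → Fin 2,
      MvPolynomial.eval (fun i => ((w i : ℕ) : F)) g' = ((f' w : ℕ) : F))
    (x : Fin n → Fin 2) (y : Fin n → F) (hy : y ≠ 0)
    (hvals : ∀ j : F, j ≠ 0 →
      MvPolynomial.eval (fun i => ((x i : ℕ) : F) + j * y i) g
        = MvPolynomial.eval (fun i => ((x i : ℕ) : F) + j * y i) g') :
    f x = f' x := by
  classical
  -- total degree bound from multilinearity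
  have htd : ∀ p : MvPolynomial (Fin n) F, (∀ i, p.degreeOf i ≤ 1) → p.totalDegree ≤ n := by
    intro p hp
    apply Finset.sup_le
    intro d hd
    calc d.sum (fun _ e => e) = ∑ i ∈ d.support, d i := rfl
      _ ≤ ∑ i : Fin n, d i := Finset.sum_le_sum_of_subset (Finset.subset_univ _)
      _ ≤ ∑ _i : Fin n, 1 := Finset.sum_le_sum (fun i _ => le_trans
            (MvPolynomial.monomial_le_degreeOf i hd) (hp i))
      _ = n := by simp
  set h : MvPolynomial (Fin n) F := g - g' with hh
  have htdh : h.totalDegree ≤ n :=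
    le_trans (MvPolynomial.totalDegree_sub g g') (max_le (htd g hml) (htd g' hml'))
  set sub : Fin n → Polynomial F :=
    fun i => Polynomial.C ((x i : ℕ) : F) + Polynomial.C (y i) * Polynomial.X with hsub
  set p : Polynomial F := MvPolynomial.aeval sub h with hp
  have hdeg : p.natDegree ≤ n := by
    have := MvPolynomial.aeval_natDegree_le h htdh sub (fun i => by
      apply le_trans (Polynomial.natDegree_add_le _ _)
      simp only [Polynomial.natDegree_C, max_le_iff]
      exact ⟨Nat.zero_le _,
        (Polynomial.natDegree_C_mul_le _ _).trans Polynomial.natDegree_X_le⟩)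
    simpa using this
  have hev : ∀ j : F, p.eval j =
      MvPolynomial.eval (fun i => ((x i : ℕ) : F) + j * y i) h := by
    intro j
    rw [hp, MvPolynomial.aeval_def, ← Polynomial.coe_evalRingHom,
      MvPolynomial.eval₂_comp_left (Polynomial.evalRingHom j),
      show ((Polynomial.evalRingHom j).comp (algebraMap F (Polynomial F))) = RingHom.id F from
        RingHom.ext (by simp)]
    rw [show ((Polynomial.evalRingHom j) ∘ sub) = fun i => ((x i : ℕ) : F) + j * y i from
      funext (fun i => by
        show Polynomial.eval j (sub i) = _
        rw [hsub]
        simp only [Polynomial.eval_add, Polynomial.eval_mul, Polynomial.eval_C,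
          Polynomial.eval_X]
        ring)]
    rfl
  have hp0 : p = 0 := by
    apply Polynomial.eq_zero_of_natDegree_lt_card_of_eval_eq_zero' p
      (Finset.univ.erase (0 : F))
    · intro j hj
      rw [hev j]
      have hj0 : j ≠ 0 := (Finset.mem_erase.mp hj).1
      simp [hh, map_sub, hvals j hj0]
    · have : n + 1 ≤ (Finset.univ.erase (0 : F)).card := by
        rw [Finset.card_erase_of_mem (Finset.mem_univ _), Finset.card_univ]
        omega
      omega
  have hx : MvPolynomial.eval (fun i => ((x i : ℕ) : F)) g
      = MvPolynomial.eval (fun i => ((x i : ℕ) : F)) g' := by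
    have h0 := hev 0
    rw [hp0, Polynomial.eval_zero] at h0
    simp only [zero_mul, add_zero, hh, map_sub] at h0
    exact sub_eq_zero.mp h0.symm
  have hF : ((f x : ℕ) : F) = ((f' x : ℕ) : F) := by
    rw [← hext x, ← hext' x, hx]
  have h2 : (f x : ℕ) < 2 := (f x).isLt
  have h2' : (f' x : ℕ) < 2 := (f' x).isLt
  have : (f x : ℕ) = (f' x : ℕ) := by
    interval_cases hv : (f x : ℕ) <;> interval_cases hv' : (f' x : ℕ) <;> simp_all
  exact Fin.val_injective this
end
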